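/- If P is symmetric positive definite and the matrix G (formed by stacking the rows of A and C_J) has full row rank, then the KKT matrix K = [[P, Gᵀ],[G, 0]] is invertible. -/

import Mathlib

open Matrix in

theorem stmt3 (n k : ℕ) (P : Matrix (Fin n) (Fin n) ℝ) (hP : P.PosDef)
    (G : Matrix (Fin k) (Fin n) ℝ) (hG : G.rank = k) :
    IsUnit (Matrix.fromBlocks P G.transpose G (0 : Matrix (Fin k) (Fin k) ℝ)) := by
  have hPi : Invertible P := hP.isUnit.invertible
  have hrows : LinearIndependent ℝ (fun i ↦ G i) := by
    rw [linearIndependent_iff_card_eq_finrank_span]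
    rw [Matrix.rank_eq_finrank_span_row] at hG
    simp [Set.finrank, hG]
    exact hG.symm
  have hinj : Function.Injective G.vecMul := Matrix.vecMul_injective_iff.mpr hrows
  have hPinv : (P⁻¹).PosDef := hP.inv
  have hS : (G * P⁻¹ * Gᵀ).PosDef := by
    refine Matrix.PosDef.of_dotProduct_mulVec_pos ?_ ?_
    · have h1 := hPinv.isHermitian
      have : (G * P⁻¹ * Gᵀ)ᵀ = G * P⁻¹ * Gᵀ := by
        rw [Matrix.transpose_mul, Matrix.transpose_mul, Matrix.transpose_transpose]
        have : (P⁻¹)ᵀ = P⁻¹ := by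
          simpa [Matrix.IsHermitian] using h1
        rw [this, Matrix.mul_assoc]
      simpa [Matrix.IsHermitian] using this
    · intro x hx
      have hy : x ᵥ* G ≠ 0 := by
        intro h
        apply hx
        apply hinj
        simpa using h
      have := hPinv.dotProduct_mulVec_pos hy
      simpa [Matrix.mul_assoc, ← Matrix.mulVec_mulVec, Matrix.mulVec_transpose,
        Matrix.dotProduct_mulVec] using this
  have hSinv : Invertible (G * P⁻¹ * Gᵀ) := hS.isUnit.invertible
  have hnegS : Invertible ((0 : Matrix (Fin k) (Fin k) ℝ) - G * ⅟P * Gᵀ) := by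
    have h1 : (0 : Matrix (Fin k) (Fin k) ℝ) - G * ⅟P * Gᵀ = -(G * P⁻¹ * Gᵀ) := by
      rw [Matrix.invOf_eq_nonsing_inv, zero_sub]
    rw [h1]
    exact invertibleNeg _
  have := Matrix.fromBlocks₁₁Invertible P Gᵀ G (0 : Matrix (Fin k) (Fin k) ℝ)
  exact isUnit_of_invertible _
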